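/- arXiv:1711.00195 — 2 statements merged into one kernel-verified Lean document; each statement's English description precedes it below -/
import Mathlib

section
/- Let E₀ be an index set and c₀ > 0 such that Im z ≤ −c₀ for every (z,j) ∈ E₀, and set c = min(1, c₀). Define E'_{I,k}, Ē_{I,k}, E_{I,k} by the recursion described in the context (starting from the empty sets), and let E'_I, Ē_I, E_I denote their unions over k. Then E'_I, Ē_I, and E_I are index sets; in particular, for every N ∈ ℝ each of the sets {(z,j) ∈ E_I : Im z > −N}, {(z,j) ∈ Ē_I : Im z > −N}, {(z,j) ∈ E'_I : Im z > −N} is finite. Moreover: every (z,j) ∈ E'_I satisfies Im z ≤ −c; every (z,j) ∈ Ē_I with Im z > −c equals (0,0); and every (z,j) ∈ E_I with Im z > −c equals (0,0) or (0,1). -/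
/-- An index set: a discrete subset of `ℂ × ℕ` which is downward closed in the second entry,
has only finitely many elements with `Im z > -C` for every `C`, and is closed under
`z ↦ z - i`. -/
def IsIndexSet (E : Set (ℂ × ℕ)) : Prop :=
  (∀ z : ℂ, ∀ j j' : ℕ, (z, j) ∈ E → j' ≤ j → (z, j') ∈ E) ∧
  (∀ C : ℝ, {p : ℂ × ℕ | p ∈ E ∧ -C < p.1.im}.Finite) ∧
  (∀ z : ℂ, ∀ j : ℕ, (z, j) ∈ E → (z - Complex.I, j) ∈ E)

/-- The extended union `E₁ ∪̄ E₂`. -/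
def extUnion (E₁ E₂ : Set (ℂ × ℕ)) : Set (ℂ × ℕ) :=
  E₁ ∪ E₂ ∪
    {p : ℂ × ℕ | ∃ j₁ j₂ : ℕ, (p.1, j₁) ∈ E₁ ∧ (p.1, j₂) ∈ E₂ ∧ p.2 ≤ j₁ + j₂ + 1}

/-- The sum `E₁ + E₂ = {(z₁+z₂, j₁+j₂)}`. -/
def idxSum (E₁ E₂ : Set (ℂ × ℕ)) : Set (ℂ × ℕ) :=
  {p : ℂ × ℕ | ∃ z₁ : ℂ, ∃ j₁ : ℕ, ∃ z₂ : ℂ, ∃ j₂ : ℕ,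
    (z₁, j₁) ∈ E₁ ∧ (z₂, j₂) ∈ E₂ ∧ p = (z₁ + z₂, j₁ + j₂)}

/-- `idxSMul j E` is the `j`-fold sum `E + ⋯ + E` (for `j ≥ 1`). -/
def idxSMul : ℕ → Set (ℂ × ℕ) → Set (ℂ × ℕ)
  | 0, _ => {((0 : ℂ), (0 : ℕ))}
  | n + 1, E => idxSum E (idxSMul n E)

/-- `E - i = {(z - i, j) : (z,j) ∈ E}`. -/
def idxMinusI (E : Set (ℂ × ℕ)) : Set (ℂ × ℕ) :=
  (fun p : ℂ × ℕ => (p.1 - Complex.I, p.2)) '' E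

/-- `F + i = {(z + i, j) : (z,j) ∈ F}`. -/
def idxPlusI (E : Set (ℂ × ℕ)) : Set (ℂ × ℕ) :=
  (fun p : ℂ × ℕ => (p.1 + Complex.I, p.2)) '' E

/-- The index set denoted `0`, i.e. `{(-i n, 0) : n ∈ ℕ}`. -/
def idxZero : Set (ℂ × ℕ) :=
  {p : ℂ × ℕ | ∃ n : ℕ, p = (-(n : ℂ) * Complex.I, 0)}

/-- The recursion producing the index sets at null infinity: the value at `k` is the triple
`(E'_{I,k}, Ē_{I,k}, E_{I,k})`, with
`E'_{I,k+1} = E₀ ∪̄ (2E_{I,k} - i)`,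
`Ē_{I,k+1} = 0 ∪ (E₀ ∪̄ ((Ē_{I,k} + E'_{I,k}) ∪ (2E_{I,k} - i)))`,
`E_{I,k+1} = (0 ∪̄ (E₀ ∪̄ ((E_{I,k} + E'_{I,k}) ∪ (2Ē_{I,k})))) ∪ ⋃_{j≥1} (j(E_{I,k}-i)+i)`. -/
def scriRec (E₀ : Set (ℂ × ℕ)) : ℕ → Set (ℂ × ℕ) × Set (ℂ × ℕ) × Set (ℂ × ℕ)
  | 0 => (∅, ∅, ∅)
  | k + 1 =>
      (extUnion E₀ (idxMinusI (idxSMul 2 (scriRec E₀ k).2.2)),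
       idxZero ∪ extUnion E₀
         (idxSum (scriRec E₀ k).2.1 (scriRec E₀ k).1 ∪
           idxMinusI (idxSMul 2 (scriRec E₀ k).2.2)),
       extUnion idxZero (extUnion E₀
           (idxSum (scriRec E₀ k).2.2 (scriRec E₀ k).1 ∪ idxSMul 2 (scriRec E₀ k).2.1)) ∪
         ⋃ (j : ℕ) (_ : 1 ≤ j), idxPlusI (idxSMul j (idxMinusI (scriRec E₀ k).2.2)))

open Complex

-- basic membership lemmas
lemma mem_extUnion {E₁ E₂ : Set (ℂ × ℕ)} {p : ℂ × ℕ} :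
    p ∈ extUnion E₁ E₂ ↔ p ∈ E₁ ∨ p ∈ E₂ ∨
      ∃ j₁ j₂ : ℕ, (p.1, j₁) ∈ E₁ ∧ (p.1, j₂) ∈ E₂ ∧ p.2 ≤ j₁ + j₂ + 1 := by
  rw [extUnion, Set.mem_union, Set.mem_union, or_assoc]; rfl

lemma mem_idxSum {E₁ E₂ : Set (ℂ × ℕ)} {p : ℂ × ℕ} :
    p ∈ idxSum E₁ E₂ ↔ ∃ z₁ j₁ z₂ j₂,
      (z₁, j₁) ∈ E₁ ∧ (z₂, j₂) ∈ E₂ ∧ p = (z₁ + z₂, j₁ + j₂) := Iff.rfl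

lemma mem_idxMinusI {E : Set (ℂ × ℕ)} {p : ℂ × ℕ} :
    p ∈ idxMinusI E ↔ ∃ z j, (z, j) ∈ E ∧ p = (z - Complex.I, j) := by
  constructor
  · rintro ⟨⟨z, j⟩, hq, rfl⟩; exact ⟨z, j, hq, rfl⟩
  · rintro ⟨z, j, hq, rfl⟩; exact ⟨(z, j), hq, rfl⟩

lemma mem_idxPlusI {E : Set (ℂ × ℕ)} {p : ℂ × ℕ} :
    p ∈ idxPlusI E ↔ ∃ z j, (z, j) ∈ E ∧ p = (z + Complex.I, j) := by
  constructor
  · rintro ⟨⟨z, j⟩, hq, rfl⟩; exact ⟨z, j, hq, rfl⟩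
  · rintro ⟨z, j, hq, rfl⟩; exact ⟨(z, j), hq, rfl⟩

-- list characterization of idxSMul
lemma mem_idxSMul_iff {E : Set (ℂ × ℕ)} {m : ℕ} {p : ℂ × ℕ} :
    p ∈ idxSMul m E ↔ ∃ l : List (ℂ × ℕ), l.length = m ∧ (∀ q ∈ l, q ∈ E) ∧
      p = ((l.map Prod.fst).sum, (l.map Prod.snd).sum) := by
  induction m generalizing p with
  | zero =>
    constructor
    · rintro h; exact ⟨[], rfl, by simp, by simpa [idxSMul] using h⟩
    · rintro ⟨l, hl, -, rfl⟩
      rw [List.length_eq_zero_iff] at hl; subst hl; simp [idxSMul]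
  | succ m ih =>
    constructor
    · rintro ⟨z₁, j₁, z₂, j₂, h₁, h₂, rfl⟩
      obtain ⟨l, hl, hmem, hp⟩ := ih.mp h₂
      refine ⟨(z₁, j₁) :: l, by simp [hl], ?_, ?_⟩
      · rintro q hq
        rcases List.mem_cons.mp hq with hq | hq
        · exact hq ▸ h₁
        · exact hmem _ hq
      · simp at hp
        simp [hp.1, hp.2]
    · rintro ⟨l, hl, hmem, rfl⟩
      rcases l with _ | ⟨⟨z₁, j₁⟩, t⟩
      · simp at hl
      · refine ⟨z₁, j₁, (t.map Prod.fst).sum, (t.map Prod.snd).sum, hmem _ (by simp), ?_, by simp⟩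
        exact ih.mpr ⟨t, by simpa using hl, fun q hq => hmem q (List.mem_cons_of_mem _ hq), rfl⟩


-- list lemmas over ℝ
lemma list_sum_le_neg_length {L : List ℝ} (h : ∀ x ∈ L, x ≤ -1) :
    L.sum ≤ -(L.length : ℝ) := by
  have := List.sum_le_card_nsmul L (-1 : ℝ) h
  simpa [nsmul_eq_mul] using this

lemma list_mem_ge_sum {L : List ℝ} (h : ∀ x ∈ L, x ≤ 0) : ∀ x ∈ L, L.sum ≤ x := by
  induction L with
  | nil => simp
  | cons a t ih =>
    intro x hx
    have ht : ∀ y ∈ t, y ≤ 0 := fun y hy => h y (List.mem_cons_of_mem _ hy)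
    have hts : t.sum ≤ 0 := by
      have := List.sum_le_card_nsmul t (0 : ℝ) ht
      simpa using this
    rcases List.mem_cons.mp hx with rfl | hx
    · simpa using add_le_add_left hts x
    · have := ih ht x hx
      have ha : a ≤ 0 := h a (by simp)
      simp only [List.sum_cons]
      linarith

lemma list_mem_ge_sum' {L : List ℝ} (h : ∀ x ∈ L, x ≤ -1) :
    ∀ x ∈ L, L.sum ≤ x - ((L.length : ℝ) - 1) := by
  induction L with
  | nil => simp
  | cons a t ih =>
    intro x hx
    have ht : ∀ y ∈ t, y ≤ -1 := fun y hy => h y (List.mem_cons_of_mem _ hy)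
    rcases List.mem_cons.mp hx with rfl | hx
    · have := list_sum_le_neg_length ht
      simp only [List.sum_cons, List.length_cons]
      push_cast
      linarith
    · have := ih ht x hx
      have ha : a ≤ -1 := h a (by simp)
      simp only [List.sum_cons, List.length_cons]
      push_cast
      linarith

lemma list_sum_map_sub_one {α : Type*} (f : α → ℝ) (l : List α) :
    (l.map (fun x => f x - 1)).sum = (l.map f).sum - (l.length : ℝ) := by
  induction l with
  | nil => simp
  | cons a t ih => simp [ih]; push_cast; ring


def DC (S : Set (ℂ × ℕ)) : Prop := ∀ z : ℂ, ∀ j j' : ℕ, (z, j) ∈ S → j' ≤ j → (z, j') ∈ S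
def SC (S : Set (ℂ × ℕ)) : Prop := ∀ z : ℂ, ∀ j : ℕ, (z, j) ∈ S → (z - Complex.I, j) ∈ S

lemma DC.union {S T} (hS : DC S) (hT : DC T) : DC (S ∪ T) := by
  rintro z j j' (h | h) hle
  exacts [Or.inl (hS z j j' h hle), Or.inr (hT z j j' h hle)]

lemma SC.union {S T} (hS : SC S) (hT : SC T) : SC (S ∪ T) := by
  rintro z j (h | h)
  exacts [Or.inl (hS z j h), Or.inr (hT z j h)]

lemma DC.extUnion {S T} (hS : DC S) (hT : DC T) : DC (extUnion S T) := by
  rintro z j j' h hle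
  rcases mem_extUnion.mp h with h | h | ⟨j₁, j₂, h₁, h₂, h₃⟩
  · exact mem_extUnion.mpr (Or.inl (hS z j j' h hle))
  · exact mem_extUnion.mpr (Or.inr (Or.inl (hT z j j' h hle)))
  · exact mem_extUnion.mpr (Or.inr (Or.inr ⟨j₁, j₂, h₁, h₂, le_trans hle h₃⟩))

lemma SC.extUnion {S T} (hS : SC S) (hT : SC T) : SC (extUnion S T) := by
  rintro z j h
  rcases mem_extUnion.mp h with h | h | ⟨j₁, j₂, h₁, h₂, h₃⟩
  · exact mem_extUnion.mpr (Or.inl (hS z j h))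
  · exact mem_extUnion.mpr (Or.inr (Or.inl (hT z j h)))
  · exact mem_extUnion.mpr (Or.inr (Or.inr ⟨j₁, j₂, hS z j₁ h₁, hT z j₂ h₂, h₃⟩))

lemma DC.idxSum {S T} (hS : DC S) (hT : DC T) : DC (idxSum S T) := by
  rintro z j j' ⟨z₁, j₁, z₂, j₂, h₁, h₂, hp⟩ hle
  obtain ⟨hz, hj⟩ := Prod.ext_iff.mp hp
  simp only at hz hj
  refine ⟨z₁, min j' j₁, z₂, j' - min j' j₁, hS z₁ j₁ _ h₁ (min_le_right _ _),
    hT z₂ j₂ _ h₂ (by omega), ?_⟩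
  simp only [Prod.ext_iff]
  exact ⟨hz, by omega⟩

lemma SC.idxSum_left {S T : Set (ℂ × ℕ)} (hS : SC S) : SC (idxSum S T) := by
  rintro z j ⟨z₁, j₁, z₂, j₂, h₁, h₂, hp⟩
  obtain ⟨hz, hj⟩ := Prod.ext_iff.mp hp
  simp only at hz hj
  exact ⟨z₁ - Complex.I, j₁, z₂, j₂, hS z₁ j₁ h₁, h₂,
    by simp only [Prod.ext_iff]; exact ⟨by rw [hz]; ring, hj⟩⟩

lemma DC.idxSMul {S} (hS : DC S) (m : ℕ) : DC (idxSMul m S) := by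
  induction m with
  | zero =>
    rintro z j j' h hle
    have h' : (z, j) = ((0:ℂ), (0:ℕ)) := h
    obtain ⟨hz, hj⟩ := Prod.ext_iff.mp h'
    simp only at hz hj
    have hj' : j' = 0 := by omega
    subst hj'
    show (z, 0) ∈ ({((0:ℂ),(0:ℕ))} : Set (ℂ × ℕ))
    simp [Prod.ext_iff, hz]
  | succ m ih => exact hS.idxSum ih

lemma DC.idxMinusI {S} (hS : DC S) : DC (idxMinusI S) := by
  rintro z j j' h hle
  obtain ⟨w, jj, hw, hp⟩ := mem_idxMinusI.mp h
  obtain ⟨hz, hj⟩ := Prod.ext_iff.mp hp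
  simp only at hz hj; subst hj
  exact mem_idxMinusI.mpr ⟨w, j', hS w j j' hw hle, by rw [hz]⟩

lemma SC.idxMinusI {S} (hS : SC S) : SC (idxMinusI S) := by
  rintro z j h
  obtain ⟨w, jj, hw, hp⟩ := mem_idxMinusI.mp h
  obtain ⟨hz, hj⟩ := Prod.ext_iff.mp hp
  simp only at hz hj; subst hj
  exact mem_idxMinusI.mpr ⟨w - Complex.I, j, hS w j hw,
    by simp only [Prod.ext_iff]; exact ⟨by rw [hz], trivial⟩⟩

lemma DC.idxPlusI {S} (hS : DC S) : DC (idxPlusI S) := by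
  rintro z j j' h hle
  obtain ⟨w, jj, hw, hp⟩ := mem_idxPlusI.mp h
  obtain ⟨hz, hj⟩ := Prod.ext_iff.mp hp
  simp only at hz hj; subst hj
  exact mem_idxPlusI.mpr ⟨w, j', hS w j j' hw hle, by rw [hz]⟩

lemma SC.idxPlusI {S} (hS : SC S) : SC (idxPlusI S) := by
  rintro z j h
  obtain ⟨w, jj, hw, hp⟩ := mem_idxPlusI.mp h
  obtain ⟨hz, hj⟩ := Prod.ext_iff.mp hp
  simp only at hz hj; subst hj
  exact mem_idxPlusI.mpr ⟨w - Complex.I, j, hS w j hw,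
    by simp only [Prod.ext_iff]; exact ⟨by rw [hz]; ring, trivial⟩⟩

lemma DC.idxZero : DC idxZero := by
  rintro z j j' ⟨n, hp⟩ hle
  obtain ⟨hz, hj⟩ := Prod.ext_iff.mp hp
  simp only at hz hj; subst hj
  exact ⟨n, by simp only [Prod.ext_iff]; exact ⟨hz, by omega⟩⟩

lemma SC.idxZero : SC idxZero := by
  rintro z j ⟨n, hp⟩
  obtain ⟨hz, hj⟩ := Prod.ext_iff.mp hp
  simp only at hz hj; subst hj
  refine ⟨n + 1, ?_⟩
  simp only [Prod.ext_iff]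
  exact ⟨by rw [hz]; push_cast; ring, trivial⟩

lemma DC.iUnion {ι : Sort*} {S : ι → Set (ℂ × ℕ)} (h : ∀ i, DC (S i)) : DC (⋃ i, S i) := by
  rintro z j j' hm hle
  obtain ⟨i, hi⟩ := Set.mem_iUnion.mp hm
  exact Set.mem_iUnion.mpr ⟨i, h i z j j' hi hle⟩

lemma SC.iUnion {ι : Sort*} {S : ι → Set (ℂ × ℕ)} (h : ∀ i, SC (S i)) : SC (⋃ i, S i) := by
  rintro z j hm
  obtain ⟨i, hi⟩ := Set.mem_iUnion.mp hm
  exact Set.mem_iUnion.mpr ⟨i, h i z j hi⟩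

lemma DC.empty : DC (∅ : Set (ℂ × ℕ)) := by rintro z j j' h; cases h
lemma SC.empty : SC (∅ : Set (ℂ × ℕ)) := by rintro z j h; cases h

lemma SC.idxSMul_succ {S : Set (ℂ × ℕ)} (hS : SC S) (m : ℕ) : SC (idxSMul (m + 1) S) :=
  hS.idxSum_left



lemma im_list_sum (l : List ℂ) : l.sum.im = (l.map Complex.im).sum :=
  map_list_sum Complex.imAddGroupHom l

lemma list_sum_map_add_const (l : List (ℂ × ℕ)) (w : ℂ) :
    (l.map (fun q : ℂ × ℕ => q.1 + w)).sum = (l.map Prod.fst).sum + l.length * w := by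
  induction l with
  | nil => simp
  | cons a t ih => simp [ih]; ring

lemma mem_idxSMul_idxMinusI {E : Set (ℂ × ℕ)} {m : ℕ} {p : ℂ × ℕ} :
    p ∈ idxSMul m (idxMinusI E) ↔ ∃ l : List (ℂ × ℕ), l.length = m ∧ (∀ q ∈ l, q ∈ E) ∧
      p = ((l.map Prod.fst).sum - (m : ℂ) * Complex.I, (l.map Prod.snd).sum) := by
  rw [mem_idxSMul_iff]
  constructor
  · rintro ⟨l', hlen, hmem, rfl⟩
    refine ⟨l'.map (fun q => (q.1 + Complex.I, q.2)), by simp [hlen], ?_, ?_⟩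
    · rintro q hq
      simp only [List.mem_map] at hq
      obtain ⟨r, hr, rfl⟩ := hq
      obtain ⟨z, j, hzj, rfl⟩ := mem_idxMinusI.mp (hmem r hr)
      simpa using hzj
    · have h1 : ((l'.map (fun q : ℂ × ℕ => (q.1 + Complex.I, q.2))).map Prod.fst).sum
          = (l'.map Prod.fst).sum + (m : ℂ) * Complex.I := by
        rw [List.map_map]
        have h : (Prod.fst ∘ fun q : ℂ × ℕ => (q.1 + Complex.I, q.2))
            = fun q : ℂ × ℕ => q.1 + Complex.I := rfl
        rw [h, list_sum_map_add_const, hlen]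
      have h2 : ((l'.map (fun q : ℂ × ℕ => (q.1 + Complex.I, q.2))).map Prod.snd).sum
          = (l'.map Prod.snd).sum := by
        rw [List.map_map]; rfl
      rw [h1, h2]
      simp only [Prod.ext_iff]
      exact ⟨by ring, trivial⟩
  · rintro ⟨l, hlen, hmem, rfl⟩
    refine ⟨l.map (fun q => (q.1 - Complex.I, q.2)), by simp [hlen], ?_, ?_⟩
    · rintro q hq
      simp only [List.mem_map] at hq
      obtain ⟨r, hr, rfl⟩ := hq
      exact mem_idxMinusI.mpr ⟨r.1, r.2, hmem r hr, rfl⟩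
    · have h1 : ((l.map (fun q : ℂ × ℕ => (q.1 - Complex.I, q.2))).map Prod.fst).sum
          = (l.map Prod.fst).sum - (m : ℂ) * Complex.I := by
        rw [List.map_map]
        have h : (Prod.fst ∘ fun q : ℂ × ℕ => (q.1 - Complex.I, q.2))
            = fun q : ℂ × ℕ => q.1 + (-Complex.I) := by funext q; simp; ring
        rw [h, list_sum_map_add_const, hlen]; ring
      have h2 : ((l.map (fun q : ℂ × ℕ => (q.1 - Complex.I, q.2))).map Prod.snd).sum
          = (l.map Prod.snd).sum := by
        rw [List.map_map]; rfl
      rw [h1, h2]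



def inM (G : Set ℂ) (z : ℂ) : Prop := ∃ l : List ℂ, (∀ w ∈ l, w ∈ G) ∧ z = l.sum

lemma inM.zero (G : Set ℂ) : inM G 0 := ⟨[], by simp, by simp⟩

lemma inM.add {G : Set ℂ} {z₁ z₂ : ℂ} (h₁ : inM G z₁) (h₂ : inM G z₂) : inM G (z₁ + z₂) := by
  obtain ⟨l₁, hl₁, rfl⟩ := h₁
  obtain ⟨l₂, hl₂, rfl⟩ := h₂
  refine ⟨l₁ ++ l₂, ?_, by simp⟩
  intro w hw
  rcases List.mem_append.mp hw with h | h
  exacts [hl₁ w h, hl₂ w h]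

lemma inM.of_mem {G : Set ℂ} {w : ℂ} (h : w ∈ G) : inM G w := ⟨[w], by simpa, by simp⟩

lemma finite_bounded_sums {G : Set ℂ} (hG : G.Finite) (L : ℕ) :
    {z : ℂ | ∃ l : List ℂ, (∀ w ∈ l, w ∈ G) ∧ l.length ≤ L ∧ z = l.sum}.Finite := by
  induction L with
  | zero =>
    refine Set.Finite.subset (Set.finite_singleton 0) ?_
    rintro z ⟨l, -, hlen, rfl⟩
    rw [Nat.le_zero, List.length_eq_zero_iff] at hlen
    simp [hlen]
  | succ L ih =>
    refine Set.Finite.subset (Set.Finite.union (Set.finite_singleton 0)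
      (Set.Finite.biUnion hG (fun w _ => ih.image (fun z => w + z)))) ?_
    rintro z ⟨l, hmem, hlen, rfl⟩
    rcases l with _ | ⟨a, t⟩
    · simp
    · right
      refine Set.mem_biUnion (hmem a (by simp)) ?_
      refine ⟨t.sum, ⟨t, fun w hw => hmem w (List.mem_cons_of_mem _ hw), by simpa using hlen, rfl⟩, by simp⟩

lemma inM_slice_finite {G : Set ℂ} {c : ℝ} (hc : 0 < c) (hGim : ∀ w ∈ G, w.im ≤ -c)
    (hGf : ∀ N : ℝ, {w : ℂ | w ∈ G ∧ -N < w.im}.Finite) (N : ℝ) :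
    {z : ℂ | inM G z ∧ -N < z.im}.Finite := by
  set G' : Set ℂ := {w : ℂ | w ∈ G ∧ -N < w.im} with hG'
  set L : ℕ := ⌈N / c⌉₊ with hL
  refine Set.Finite.subset (finite_bounded_sums (hGf N) L) ?_
  rintro z ⟨⟨l, hmem, rfl⟩, him⟩
  have him0 : ∀ x ∈ l.map Complex.im, x ≤ 0 :=  by
    intro x hx
    obtain ⟨w, hw, rfl⟩ := List.mem_map.mp hx
    exact le_trans (hGim w (hmem w hw)) (by linarith)
  have hsum : l.sum.im = (l.map Complex.im).sum := map_list_sum Complex.imAddGroupHom l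
  refine ⟨l, ?_, ?_, rfl⟩
  · intro w hw
    refine ⟨hmem w hw, ?_⟩
    have := list_mem_ge_sum him0 w.im (List.mem_map_of_mem (f := Complex.im) hw)
    rw [← hsum] at this
    linarith
  · have hlen : (l.map Complex.im).sum ≤ (l.length : ℝ) * (-c) := by
      have := List.sum_le_card_nsmul (l.map Complex.im) (-c)
        (fun x hx => by obtain ⟨w, hw, rfl⟩ := List.mem_map.mp hx; exact hGim w (hmem w hw))
      simpa [nsmul_eq_mul] using this
    have h1 : (l.length : ℝ) * c < N := by rw [← hsum] at hlen; nlinarith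
    have h2 : (l.length : ℝ) < N / c := by rw [lt_div_iff₀ hc]; exact h1
    have h3 : (l.length : ℝ) ≤ (L : ℝ) := le_trans h2.le (Nat.le_ceil _)
    exact_mod_cast h3



lemma mem_idxSMul_two {E : Set (ℂ × ℕ)} {p : ℂ × ℕ} :
    p ∈ idxSMul 2 E ↔ ∃ z₁ j₁ z₂ j₂, (z₁, j₁) ∈ E ∧ (z₂, j₂) ∈ E ∧ p = (z₁ + z₂, j₁ + j₂) := by
  constructor
  · rintro ⟨z₁, j₁, w, jw, h₁, hw, rfl⟩
    obtain ⟨z₂, j₂, z₃, j₃, h₂, h₃, heq⟩ := hw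
    have h₃' : (z₃, j₃) = ((0 : ℂ), (0 : ℕ)) := h₃
    obtain ⟨hz₃, hj₃⟩ := Prod.ext_iff.mp h₃'
    simp only at hz₃ hj₃
    subst hz₃ hj₃
    refine ⟨z₁, j₁, z₂, j₂, h₁, h₂, ?_⟩
    obtain ⟨hw1, hw2⟩ := Prod.ext_iff.mp heq
    simp only at hw1 hw2
    simp [hw1, hw2]
  · rintro ⟨z₁, j₁, z₂, j₂, h₁, h₂, rfl⟩
    exact ⟨z₁, j₁, z₂, j₂, h₁, ⟨z₂, j₂, 0, 0, h₂, rfl, by simp⟩, by simp⟩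

lemma mem_bigU {E : Set (ℂ × ℕ)} {p : ℂ × ℕ}
    (h : p ∈ ⋃ (j : ℕ) (_ : 1 ≤ j), idxPlusI (idxSMul j (idxMinusI E)))
    (hE : ∀ q ∈ E, q.1.im ≤ 0) :
    ∃ m : ℕ, 1 ≤ m ∧ ∃ l : List (ℂ × ℕ), l.length = m ∧ (∀ q ∈ l, q ∈ E) ∧
      p.1 = (l.map Prod.fst).sum - (m : ℂ) * Complex.I + Complex.I ∧
      p.2 = (l.map Prod.snd).sum ∧
      p.1.im = (l.map (fun q : ℂ × ℕ => q.1.im)).sum - (m : ℝ) + 1 ∧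
      (l.map (fun q : ℂ × ℕ => q.1.im)).sum ≤ 0 := by
  simp only [Set.mem_iUnion] at h
  obtain ⟨m, hm, hp⟩ := h
  obtain ⟨w, jw, hw, hpeq⟩ := mem_idxPlusI.mp hp
  obtain ⟨l, hlen, hmem, hweq⟩ := mem_idxSMul_idxMinusI.mp hw
  obtain ⟨hw1, hw2⟩ := Prod.ext_iff.mp hweq
  simp only at hw1 hw2
  obtain ⟨hp1, hp2⟩ := Prod.ext_iff.mp hpeq
  simp only at hp1 hp2
  have him : ∀ x ∈ l.map (fun q : ℂ × ℕ => q.1.im), x ≤ 0 := by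
    intro x hx
    obtain ⟨q, hq, rfl⟩ := List.mem_map.mp hx
    exact hE q (hmem q hq)
  have hsums : ((l.map Prod.fst).sum).im = (l.map (fun q : ℂ × ℕ => q.1.im)).sum := by
    rw [im_list_sum, List.map_map]; rfl
  refine ⟨m, hm, l, hlen, hmem, by rw [hp1, hw1], by rw [hp2, hw2], ?_, ?_⟩
  · rw [hp1, hw1]; simp [hsums]
  · have := List.sum_le_card_nsmul (l.map (fun q : ℂ × ℕ => q.1.im)) 0 him
    simpa using this

section Main

variable {E₀ : Set (ℂ × ℕ)} {c₀ : ℝ}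

lemma scri_inv (hc₀ : 0 < c₀) (hE₀im : ∀ z : ℂ, ∀ j : ℕ, (z, j) ∈ E₀ → z.im ≤ -c₀) (k : ℕ) :
    (∀ p ∈ (scriRec E₀ k).1, p.1.im ≤ -(min 1 c₀)) ∧
    (∀ p ∈ (scriRec E₀ k).2.1, p.1.im ≤ 0) ∧
    (∀ p ∈ (scriRec E₀ k).2.2, p.1.im ≤ 0) ∧
    (∀ p ∈ (scriRec E₀ k).2.1, -(min 1 c₀) < p.1.im → p = ((0 : ℂ), (0 : ℕ))) ∧
    (∀ p ∈ (scriRec E₀ k).2.2, -(min 1 c₀) < p.1.im →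
      p = ((0 : ℂ), (0 : ℕ)) ∨ p = ((0 : ℂ), (1 : ℕ))) := by
  set c : ℝ := min 1 c₀ with hc
  have hc1 : c ≤ 1 := min_le_left _ _
  have hcc₀ : c ≤ c₀ := min_le_right _ _
  have hcpos : 0 < c := lt_min one_pos hc₀
  have hE₀c : ∀ z : ℂ, ∀ j : ℕ, (z, j) ∈ E₀ → z.im ≤ -c := fun z j h =>
    le_trans (hE₀im z j h) (by linarith)
  induction k with
  | zero => refine ⟨?_, ?_, ?_, ?_, ?_⟩ <;> rintro p hp <;> cases hp
  | succ k ih =>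
    obtain ⟨ih1, ih2, ih3, ih4, ih5⟩ := ih
    -- facts about the twoE set
    have htwoE : ∀ p ∈ idxMinusI (idxSMul 2 (scriRec E₀ k).2.2), p.1.im ≤ -1 := by
      rintro p hp
      obtain ⟨w, jw, hw, hpeq⟩ := mem_idxMinusI.mp hp
      obtain ⟨z₁, j₁, z₂, j₂, h₁, h₂, hweq⟩ := mem_idxSMul_two.mp hw
      obtain ⟨hw1, hw2⟩ := Prod.ext_iff.mp hweq; simp only at hw1 hw2; subst hw1
      obtain ⟨hp1, hp2⟩ := Prod.ext_iff.mp hpeq; simp only at hp1 hp2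
      rw [hp1]
      have := ih3 _ h₁; have := ih3 _ h₂
      simp only [sub_im, add_im, Complex.I_im] at *
      linarith
    -- E'
    have hE' : ∀ p ∈ (scriRec E₀ (k+1)).1, p.1.im ≤ -c := by
      rintro p hp
      rcases mem_extUnion.mp hp with h | h | ⟨j₁, j₂, h₁, h₂, h₃⟩
      · exact hE₀c p.1 p.2 h
      · exact le_trans (htwoE p h) (by linarith)
      · exact hE₀c p.1 j₁ h₁
    -- Ē im ≤ 0
    have hEb0 : ∀ p ∈ (scriRec E₀ (k+1)).2.1, p.1.im ≤ 0 := by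
      rintro p hp
      rcases hp with h | h
      · obtain ⟨n, hn⟩ := h
        obtain ⟨h1, -⟩ := Prod.ext_iff.mp hn; simp only at h1
        rw [h1]; simp [Complex.I_im]
      · rcases mem_extUnion.mp h with h | h | ⟨j₁, j₂, h₁, h₂, h₃⟩
        · exact le_trans (hE₀c p.1 p.2 h) (by linarith)
        · rcases h with h | h
          · obtain ⟨z₁, j₁, z₂, j₂, h₁, h₂, hpeq⟩ := h
            obtain ⟨h1, -⟩ := Prod.ext_iff.mp hpeq; simp only at h1
            rw [h1]
            have := ih2 _ h₁; have := ih1 _ h₂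
            simp only [add_im]; linarith
          · exact le_trans (htwoE p h) (by linarith)
        · exact le_trans (hE₀c p.1 j₁ h₁) (by linarith)
    -- E im ≤ 0
    have hZ0 : ∀ p ∈ idxZero, p.1.im ≤ 0 := by
      rintro p ⟨n, hn⟩
      obtain ⟨h1, -⟩ := Prod.ext_iff.mp hn; simp only at h1
      rw [h1]; simp [Complex.I_im]
    have hinner0 : ∀ p ∈ extUnion E₀
        (idxSum (scriRec E₀ k).2.2 (scriRec E₀ k).1 ∪ idxSMul 2 (scriRec E₀ k).2.1),
        p.1.im ≤ 0 := by
      rintro p hp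
      rcases mem_extUnion.mp hp with h | h | ⟨j₁, j₂, h₁, h₂, h₃⟩
      · exact le_trans (hE₀c p.1 p.2 h) (by linarith)
      · rcases h with h | h
        · obtain ⟨z₁, j₁, z₂, j₂, h₁, h₂, hpeq⟩ := h
          obtain ⟨h1, -⟩ := Prod.ext_iff.mp hpeq; simp only at h1
          rw [h1]
          have := ih3 _ h₁; have := ih1 _ h₂
          simp only [add_im]; linarith
        · obtain ⟨z₁, j₁, z₂, j₂, h₁, h₂, hpeq⟩ := mem_idxSMul_two.mp h
          obtain ⟨h1, -⟩ := Prod.ext_iff.mp hpeq; simp only at h1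
          rw [h1]
          have := ih2 _ h₁; have := ih2 _ h₂
          simp only [add_im]; linarith
      · exact le_trans (hE₀c p.1 j₁ h₁) (by linarith)
    have hE0 : ∀ p ∈ (scriRec E₀ (k+1)).2.2, p.1.im ≤ 0 := by
      rintro p hp
      rcases hp with h | h
      · rcases mem_extUnion.mp h with h | h | ⟨j₁, j₂, h₁, h₂, h₃⟩
        · exact hZ0 p h
        · exact hinner0 p h
        · exact hZ0 (p.1, j₁) h₁
      · obtain ⟨m, hm, l, hlen, hmem, hfst, hsnd, him, hsum0⟩ := mem_bigU h ih3
        rw [him]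
        have : (1 : ℝ) ≤ (m : ℝ) := by exact_mod_cast hm
        linarith
    refine ⟨hE', hEb0, hE0, ?_, ?_⟩
    -- Ē level
    · rintro p hp hlvl
      rcases hp with h | h
      · obtain ⟨n, hn⟩ := h
        obtain ⟨h1, h2⟩ := Prod.ext_iff.mp hn; simp only at h1 h2
        have hn0 : n = 0 := by
          by_contra hne
          have : (1 : ℝ) ≤ (n : ℝ) := by exact_mod_cast Nat.one_le_iff_ne_zero.mpr hne
          rw [h1] at hlvl; simp [Complex.I_im] at hlvl
          linarith
        subst hn0
        rw [Prod.ext_iff]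
        constructor
        · rw [h1]; simp
        · simpa using h2
      · exfalso
        rcases mem_extUnion.mp h with h | h | ⟨j₁, j₂, h₁, h₂, h₃⟩
        · exact absurd (hE₀c p.1 p.2 h) (by linarith)
        · rcases h with h | h
          · obtain ⟨z₁, j₁, z₂, j₂, h₁, h₂, hpeq⟩ := h
            obtain ⟨h1, -⟩ := Prod.ext_iff.mp hpeq; simp only at h1
            have := ih2 _ h₁; have := ih1 _ h₂
            rw [h1] at hlvl; simp only [add_im] at hlvl
            linarith
          · have := htwoE p h; linarith
        · exact absurd (hE₀c p.1 j₁ h₁) (by linarith)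
    -- E level
    · have hinnerlvl : ∀ p ∈ extUnion E₀
          (idxSum (scriRec E₀ k).2.2 (scriRec E₀ k).1 ∪ idxSMul 2 (scriRec E₀ k).2.1),
          -c < p.1.im → p = ((0 : ℂ), (0 : ℕ)) := by
        rintro p hp hlvl
        rcases mem_extUnion.mp hp with h | h | ⟨j₁, j₂, h₁, h₂, h₃⟩
        · exact absurd (hE₀c p.1 p.2 h) (by linarith)
        · rcases h with h | h
          · exfalso
            obtain ⟨z₁, j₁, z₂, j₂, h₁, h₂, hpeq⟩ := h
            obtain ⟨h1, -⟩ := Prod.ext_iff.mp hpeq; simp only at h1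
            have := ih3 _ h₁; have := ih1 _ h₂
            rw [h1] at hlvl; simp only [add_im] at hlvl
            linarith
          · obtain ⟨z₁, j₁, z₂, j₂, h₁, h₂, hpeq⟩ := mem_idxSMul_two.mp h
            obtain ⟨h1, h2⟩ := Prod.ext_iff.mp hpeq; simp only at h1 h2
            have hi1 := ih2 _ h₁; have hi2 := ih2 _ h₂
            rw [h1] at hlvl; simp only [add_im] at hlvl
            have hl1 : -c < z₁.im := by linarith
            have hl2 : -c < z₂.im := by linarith
            have e1 := ih4 _ h₁ hl1
            have e2 := ih4 _ h₂ hl2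
            obtain ⟨e1a, e1b⟩ := Prod.ext_iff.mp e1; simp only at e1a e1b
            obtain ⟨e2a, e2b⟩ := Prod.ext_iff.mp e2; simp only at e2a e2b
            rw [Prod.ext_iff]
            constructor
            · rw [h1, e1a, e2a]; simp
            · simp only [h2, e1b, e2b]
        · exact absurd (hE₀c p.1 j₁ h₁) (by linarith)
      rintro p hp hlvl
      rcases hp with h | h
      · rcases mem_extUnion.mp h with h | h | ⟨j₁, j₂, h₁, h₂, h₃⟩
        · obtain ⟨n, hn⟩ := h
          obtain ⟨h1, h2⟩ := Prod.ext_iff.mp hn; simp only at h1 h2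
          have hn0 : n = 0 := by
            by_contra hne
            have : (1 : ℝ) ≤ (n : ℝ) := by exact_mod_cast Nat.one_le_iff_ne_zero.mpr hne
            rw [h1] at hlvl; simp [Complex.I_im] at hlvl
            linarith
          subst hn0
          left
          rw [Prod.ext_iff]
          exact ⟨by rw [h1]; simp, by simpa using h2⟩
        · exact Or.inl (hinnerlvl p h hlvl)
        · -- extended part : (p.1, j₁) ∈ idxZero, (p.1, j₂) ∈ inner
          obtain ⟨n, hn⟩ := h₁
          obtain ⟨h1, h2⟩ := Prod.ext_iff.mp hn; simp only at h1 h2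
          have hn0 : n = 0 := by
            by_contra hne
            have : (1 : ℝ) ≤ (n : ℝ) := by exact_mod_cast Nat.one_le_iff_ne_zero.mpr hne
            rw [h1] at hlvl; simp [Complex.I_im] at hlvl
            linarith
          subst hn0
          have hz : p.1 = 0 := by rw [h1]; simp
          have := hinnerlvl (p.1, j₂) h₂ (by simpa using hlvl)
          obtain ⟨-, hj₂⟩ := Prod.ext_iff.mp this; simp only at hj₂
          subst h2 hj₂
          have hp2 : p.2 ≤ 1 := by omega
          rcases Nat.le_one_iff_eq_zero_or_eq_one.mp hp2 with h0 | h0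
          · exact Or.inl (Prod.ext_iff.mpr ⟨hz, h0⟩)
          · exact Or.inr (Prod.ext_iff.mpr ⟨hz, h0⟩)
      · obtain ⟨m, hm, l, hlen, hmem, hfst, hsnd, him, hsum0⟩ := mem_bigU h ih3
        have hm1 : m = 1 := by
          by_contra hne
          have h2m : (2 : ℝ) ≤ (m : ℝ) := by exact_mod_cast (by omega : 2 ≤ m)
          rw [him] at hlvl
          linarith
        subst hm1
        obtain ⟨q, hq⟩ := List.length_eq_one_iff.mp hlen
        subst hq
        have hq1 : p.1 = q.1 := by rw [hfst]; simp
        have hq2 : p.2 = q.2 := by rw [hsnd]; simp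
        have hqmem : q ∈ (scriRec E₀ k).2.2 := hmem q (by simp)
        have : (q.1, q.2) = q := rfl
        have hres := ih5 q hqmem (by rw [← hq1]; exact hlvl)
        have hpq : p = q := Prod.ext_iff.mpr ⟨hq1, hq2⟩
        rw [hpq]
        exact hres

end Main



section Main2

variable {E₀ : Set (ℂ × ℕ)}

lemma scri_dc_sc (hdc : DC E₀) (hsc : SC E₀) (k : ℕ) :
    (DC (scriRec E₀ k).1 ∧ DC (scriRec E₀ k).2.1 ∧ DC (scriRec E₀ k).2.2) ∧
    (SC (scriRec E₀ k).1 ∧ SC (scriRec E₀ k).2.1 ∧ SC (scriRec E₀ k).2.2) := by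
  induction k with
  | zero => exact ⟨⟨DC.empty, DC.empty, DC.empty⟩, ⟨SC.empty, SC.empty, SC.empty⟩⟩
  | succ k ih =>
    obtain ⟨⟨d1, d2, d3⟩, s1, s2, s3⟩ := ih
    refine ⟨⟨?_, ?_, ?_⟩, ?_, ?_, ?_⟩
    · exact hdc.extUnion (d3.idxSMul 2).idxMinusI
    · exact DC.idxZero.union (hdc.extUnion ((d2.idxSum d1).union (d3.idxSMul 2).idxMinusI))
    · refine (DC.idxZero.extUnion (hdc.extUnion ((d3.idxSum d1).union (d2.idxSMul 2)))).union ?_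
      exact DC.iUnion fun j => DC.iUnion fun _ => ((d3.idxMinusI.idxSMul j)).idxPlusI
    · exact hsc.extUnion (SC.idxMinusI (SC.idxSum_left s3))
    · exact SC.idxZero.union (hsc.extUnion ((SC.idxSum_left s2).union
        (SC.idxMinusI (SC.idxSum_left s3))))
    · refine (SC.idxZero.extUnion (hsc.extUnion ((SC.idxSum_left s3).union
        (SC.idxSum_left s2)))).union ?_
      refine SC.iUnion fun j => SC.iUnion fun hj => ?_
      obtain ⟨m, rfl⟩ : ∃ m, j = m + 1 := ⟨j - 1, by omega⟩
      exact (SC.idxSMul_succ s3.idxMinusI m).idxPlusI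

end Main2

def sG (E₀ : Set (ℂ × ℕ)) : Set ℂ := insert (-Complex.I) {w : ℂ | ∃ j : ℕ, (w, j) ∈ E₀}

lemma inM_list_sum {G : Set ℂ} {l : List ℂ} (h : ∀ x ∈ l, inM G x) : inM G l.sum := by
  induction l with
  | nil => simpa using inM.zero G
  | cons a t ih =>
    simp only [List.sum_cons]
    exact (h a (by simp)).add (ih fun x hx => h x (List.mem_cons_of_mem _ hx))

lemma inM_negI {E₀ : Set (ℂ × ℕ)} : inM (sG E₀) (-Complex.I) :=
  inM.of_mem (Set.mem_insert _ _)

lemma inM_nat_negI {E₀ : Set (ℂ × ℕ)} (n : ℕ) : inM (sG E₀) (-(n : ℂ) * Complex.I) := by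
  refine ⟨List.replicate n (-Complex.I), ?_, ?_⟩
  · intro w hw
    rw [List.eq_of_mem_replicate hw]
    exact Set.mem_insert _ _
  · rw [List.sum_replicate, nsmul_eq_mul]
    push_cast; ring

lemma inM_E₀ {E₀ : Set (ℂ × ℕ)} {p : ℂ × ℕ} (h : p ∈ E₀) : inM (sG E₀) p.1 :=
  inM.of_mem (Set.mem_insert_iff.mpr (Or.inr ⟨p.2, h⟩))

lemma scri_inM {E₀ : Set (ℂ × ℕ)} (k : ℕ) :
    (∀ p ∈ (scriRec E₀ k).1, inM (sG E₀) p.1) ∧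
    (∀ p ∈ (scriRec E₀ k).2.1, inM (sG E₀) p.1) ∧
    (∀ p ∈ (scriRec E₀ k).2.2, inM (sG E₀) p.1) := by
  induction k with
  | zero => refine ⟨?_, ?_, ?_⟩ <;> rintro p hp <;> cases hp
  | succ k ih =>
    obtain ⟨ih1, ih2, ih3⟩ := ih
    have hZ : ∀ p ∈ idxZero, inM (sG E₀) p.1 := by
      rintro p ⟨n, hn⟩
      obtain ⟨h1, -⟩ := Prod.ext_iff.mp hn; simp only at h1
      rw [h1]; exact inM_nat_negI n
    have htwoE : ∀ p ∈ idxMinusI (idxSMul 2 (scriRec E₀ k).2.2), inM (sG E₀) p.1 := by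
      rintro p hp
      obtain ⟨w, jw, hw, hpeq⟩ := mem_idxMinusI.mp hp
      obtain ⟨z₁, j₁, z₂, j₂, h₁, h₂, hweq⟩ := mem_idxSMul_two.mp hw
      obtain ⟨hw1, -⟩ := Prod.ext_iff.mp hweq; simp only at hw1; subst hw1
      obtain ⟨hp1, -⟩ := Prod.ext_iff.mp hpeq; simp only at hp1
      rw [hp1, sub_eq_add_neg]
      exact ((ih3 _ h₁).add (ih3 _ h₂)).add inM_negI
    have hsum : ∀ (S T : Set (ℂ × ℕ)), (∀ p ∈ S, inM (sG E₀) p.1) →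
        (∀ p ∈ T, inM (sG E₀) p.1) → ∀ p ∈ idxSum S T, inM (sG E₀) p.1 := by
      rintro S T hS hT p ⟨z₁, j₁, z₂, j₂, h₁, h₂, hpeq⟩
      obtain ⟨h1, -⟩ := Prod.ext_iff.mp hpeq; simp only at h1
      rw [h1]
      exact (hS _ h₁).add (hT _ h₂)
    have htwoEb : ∀ p ∈ idxSMul 2 (scriRec E₀ k).2.1, inM (sG E₀) p.1 := by
      rintro p hp
      obtain ⟨z₁, j₁, z₂, j₂, h₁, h₂, hpeq⟩ := mem_idxSMul_two.mp hp
      obtain ⟨h1, -⟩ := Prod.ext_iff.mp hpeq; simp only at h1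
      rw [h1]
      exact (ih2 _ h₁).add (ih2 _ h₂)
    refine ⟨?_, ?_, ?_⟩
    · rintro p hp
      rcases mem_extUnion.mp hp with h | h | ⟨j₁, j₂, h₁, h₂, h₃⟩
      · exact inM_E₀ h
      · exact htwoE p h
      · exact inM_E₀ (p := (p.1, j₁)) h₁
    · rintro p hp
      rcases hp with h | h
      · exact hZ p h
      · rcases mem_extUnion.mp h with h | h | ⟨j₁, j₂, h₁, h₂, h₃⟩
        · exact inM_E₀ h
        · rcases h with h | h
          · exact hsum _ _ ih2 ih1 p h
          · exact htwoE p h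
        · exact inM_E₀ (p := (p.1, j₁)) h₁
    · rintro p hp
      rcases hp with h | h
      · rcases mem_extUnion.mp h with h | h | ⟨j₁, j₂, h₁, h₂, h₃⟩
        · exact hZ p h
        · rcases mem_extUnion.mp h with h | h | ⟨j₁, j₂, h₁, h₂, h₃⟩
          · exact inM_E₀ h
          · rcases h with h | h
            · exact hsum _ _ ih3 ih1 p h
            · exact htwoEb p h
          · exact inM_E₀ (p := (p.1, j₁)) h₁
        · exact hZ (p.1, j₁) h₁
      · simp only [Set.mem_iUnion] at h
        obtain ⟨m, hm, hp⟩ := h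
        obtain ⟨w, jw, hw, hpeq⟩ := mem_idxPlusI.mp hp
        obtain ⟨l, hlen, hmem, hweq⟩ := mem_idxSMul_idxMinusI.mp hw
        obtain ⟨hw1, -⟩ := Prod.ext_iff.mp hweq; simp only at hw1
        obtain ⟨hp1, -⟩ := Prod.ext_iff.mp hpeq; simp only at hp1
        have hfst : inM (sG E₀) (l.map Prod.fst).sum := by
          refine inM_list_sum ?_
          intro x hx
          obtain ⟨q, hq, rfl⟩ := List.mem_map.mp hx
          exact ih3 q (hmem q hq)
        have hcast : w + Complex.I = (l.map Prod.fst).sum + (-((m - 1 : ℕ) : ℂ) * Complex.I) := by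
          rw [hw1]
          have : ((m - 1 : ℕ) : ℂ) = (m : ℂ) - 1 := by
            push_cast [Nat.cast_sub hm]; ring
          rw [this]; ring
        rw [hp1, hcast]
        exact hfst.add (inM_nat_negI (m - 1))



section Main3

variable {E₀ : Set (ℂ × ℕ)} {c₀ : ℝ}

lemma scri_ord (hc₀ : 0 < c₀) (hE₀im : ∀ z : ℂ, ∀ j : ℕ, (z, j) ∈ E₀ → z.im ≤ -c₀)
    (hE₀fin : ∀ C : ℝ, {p : ℂ × ℕ | p ∈ E₀ ∧ -C < p.1.im}.Finite) (n : ℕ) :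
    ∃ B : ℕ, ∀ k : ℕ, ∀ p : ℂ × ℕ,
      (p ∈ (scriRec E₀ k).1 ∨ p ∈ (scriRec E₀ k).2.1 ∨ p ∈ (scriRec E₀ k).2.2) →
      -((n : ℝ) * min 1 c₀) < p.1.im → p.2 ≤ B := by
  set c : ℝ := min 1 c₀ with hcdef
  have hc1 : c ≤ 1 := min_le_left _ _
  have hcc₀ : c ≤ c₀ := min_le_right _ _
  have hcpos : 0 < c := lt_min one_pos hc₀
  have hinv := scri_inv hc₀ hE₀im (E₀ := E₀)
  induction n with
  | zero =>
    refine ⟨0, fun k p hp hl => absurd hl ?_⟩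
    push_neg
    simp only [Nat.cast_zero, zero_mul, neg_zero]
    rcases hp with h | h | h
    · exact le_trans ((hinv k).1 p h) (by linarith)
    · exact (hinv k).2.1 p h
    · exact (hinv k).2.2.1 p h
  | succ n ihn =>
    obtain ⟨B, hB⟩ := ihn
    obtain ⟨J, hJ⟩ : ∃ J : ℕ, ∀ p : ℂ × ℕ, p ∈ E₀ → -(((n + 1 : ℕ) : ℝ) * c) < p.1.im →
        p.2 ≤ J := by
      obtain ⟨J, hJ⟩ := ((hE₀fin (((n + 1 : ℕ) : ℝ) * c)).image Prod.snd).bddAbove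
      exact ⟨J, fun p hp hl => hJ (Set.mem_image_of_mem _ ⟨hp, hl⟩)⟩
    have hC : ((n + 1 : ℕ) : ℝ) * c = (n : ℝ) * c + c := by push_cast; ring
    set lvl : ℂ → Prop := fun z => -(((n + 1 : ℕ) : ℝ) * c) < z.im with hlvldef
    set b' : ℕ := J + 2 * B + 2 with hb'
    set bb : ℕ := J + 3 * B + b' + 2 with hbb
    set bE : ℕ := (n + 1) * B + 2 * bb + B + b' + J + 4 with hbE
    have key : ∀ k : ℕ, (∀ p ∈ (scriRec E₀ k).1, lvl p.1 → p.2 ≤ b') ∧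
        (∀ p ∈ (scriRec E₀ k).2.1, lvl p.1 → p.2 ≤ bb) ∧
        (∀ p ∈ (scriRec E₀ k).2.2, lvl p.1 → p.2 ≤ bE) := by
      intro k
      induction k with
      | zero => refine ⟨?_, ?_, ?_⟩ <;> rintro p hp <;> cases hp
      | succ k ih =>
        obtain ⟨ih1, ih2, ih3⟩ := ih
        -- the 2E - i part
        have htwoE : ∀ p ∈ idxMinusI (idxSMul 2 (scriRec E₀ k).2.2), lvl p.1 → p.2 ≤ 2 * B := by
          rintro p hp hl
          obtain ⟨w, jw, hw, hpeq⟩ := mem_idxMinusI.mp hp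
          obtain ⟨z₁, j₁, z₂, j₂, h₁, h₂, hweq⟩ := mem_idxSMul_two.mp hw
          obtain ⟨hw1, hw2⟩ := Prod.ext_iff.mp hweq; simp only at hw1 hw2; subst hw1 hw2
          obtain ⟨hp1, hp2⟩ := Prod.ext_iff.mp hpeq; simp only at hp1 hp2
          have him : p.1.im = z₁.im + z₂.im - 1 := by rw [hp1]; simp
          have hi1 := (hinv k).2.2.1 _ h₁
          have hi2 := (hinv k).2.2.1 _ h₂
          simp only at hi1 hi2
          have hl' : -(((n + 1 : ℕ) : ℝ) * c) < p.1.im := hl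
          have hlev1 : -((n : ℝ) * c) < z₁.im := by rw [him] at hl'; linarith
          have hlev2 : -((n : ℝ) * c) < z₂.im := by rw [him] at hl'; linarith
          have := hB k (z₁, j₁) (Or.inr (Or.inr h₁)) hlev1
          have := hB k (z₂, j₂) (Or.inr (Or.inr h₂)) hlev2
          simp only at *
          omega
        -- E'(k+1)
        have hE' : ∀ p ∈ (scriRec E₀ (k + 1)).1, lvl p.1 → p.2 ≤ b' := by
          rintro p hp hl
          rcases mem_extUnion.mp hp with h | h | ⟨j₁, j₂, h₁, h₂, h₃⟩
          · have := hJ p h hl; omega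
          · have := htwoE p h hl; omega
          · have t1 := hJ (p.1, j₁) h₁ hl
            have t2 := htwoE (p.1, j₂) h₂ hl
            simp only at t1 t2
            omega
        -- Ē + E' part
        have hsumEbE' : ∀ p ∈ idxSum (scriRec E₀ k).2.1 (scriRec E₀ k).1, lvl p.1 →
            p.2 ≤ B + b' := by
          rintro p ⟨z₁, j₁, z₂, j₂, h₁, h₂, hpeq⟩ hl
          obtain ⟨hp1, hp2⟩ := Prod.ext_iff.mp hpeq; simp only at hp1 hp2
          have him : p.1.im = z₁.im + z₂.im := by rw [hp1]; simp
          have hi1 := (hinv k).2.1 _ h₁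
          have hi2 := (hinv k).1 _ h₂
          simp only at hi1 hi2
          have hl' : -(((n + 1 : ℕ) : ℝ) * c) < p.1.im := hl
          have hlev1 : -((n : ℝ) * c) < z₁.im := by rw [him] at hl'; linarith
          have hlev2 : lvl z₂ := by
            show -(((n + 1 : ℕ) : ℝ) * c) < z₂.im
            rw [him] at hl'; linarith
          have t1 := hB k (z₁, j₁) (Or.inr (Or.inl h₁)) hlev1
          have t2 := ih1 (z₂, j₂) h₂ hlev2
          simp only at t1 t2
          omega
        -- Ē(k+1)
        have hEb : ∀ p ∈ (scriRec E₀ (k + 1)).2.1, lvl p.1 → p.2 ≤ bb := by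
          rintro p hp hl
          rcases hp with h | h
          · obtain ⟨m, hm⟩ := h
            obtain ⟨-, h2⟩ := Prod.ext_iff.mp hm; simp only at h2
            omega
          · rcases mem_extUnion.mp h with h | h | ⟨j₁, j₂, h₁, h₂, h₃⟩
            · have := hJ p h hl; omega
            · rcases h with h | h
              · have := hsumEbE' p h hl; omega
              · have := htwoE p h hl; omega
            · have t2 : j₂ ≤ B + b' + 2 * B := by
                rcases h₂ with h₂ | h₂
                · have := hsumEbE' (p.1, j₂) h₂ hl; simp only at this; omega
                · have := htwoE (p.1, j₂) h₂ hl; simp only at this; omega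
              have t1 := hJ (p.1, j₁) h₁ hl
              simp only at t1
              omega
        -- E + E' part
        have hsumEE' : ∀ p ∈ idxSum (scriRec E₀ k).2.2 (scriRec E₀ k).1, lvl p.1 →
            p.2 ≤ B + b' := by
          rintro p ⟨z₁, j₁, z₂, j₂, h₁, h₂, hpeq⟩ hl
          obtain ⟨hp1, hp2⟩ := Prod.ext_iff.mp hpeq; simp only at hp1 hp2
          have him : p.1.im = z₁.im + z₂.im := by rw [hp1]; simp
          have hi1 := (hinv k).2.2.1 _ h₁
          have hi2 := (hinv k).1 _ h₂
          simp only at hi1 hi2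
          have hl' : -(((n + 1 : ℕ) : ℝ) * c) < p.1.im := hl
          have hlev1 : -((n : ℝ) * c) < z₁.im := by rw [him] at hl'; linarith
          have hlev2 : lvl z₂ := by
            show -(((n + 1 : ℕ) : ℝ) * c) < z₂.im
            rw [him] at hl'; linarith
          have t1 := hB k (z₁, j₁) (Or.inr (Or.inr h₁)) hlev1
          have t2 := ih1 (z₂, j₂) h₂ hlev2
          simp only at t1 t2
          omega
        -- 2Ē part
        have htwoEb : ∀ p ∈ idxSMul 2 (scriRec E₀ k).2.1, lvl p.1 → p.2 ≤ 2 * bb := by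
          rintro p hp hl
          obtain ⟨z₁, j₁, z₂, j₂, h₁, h₂, hpeq⟩ := mem_idxSMul_two.mp hp
          obtain ⟨hp1, hp2⟩ := Prod.ext_iff.mp hpeq; simp only at hp1 hp2
          have him : p.1.im = z₁.im + z₂.im := by rw [hp1]; simp
          have hi1 := (hinv k).2.1 _ h₁
          have hi2 := (hinv k).2.1 _ h₂
          simp only at hi1 hi2
          have hl' : -(((n + 1 : ℕ) : ℝ) * c) < p.1.im := hl
          have hlev1 : lvl z₁ := by
            show -(((n + 1 : ℕ) : ℝ) * c) < z₁.im
            rw [him] at hl'; linarith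
          have hlev2 : lvl z₂ := by
            show -(((n + 1 : ℕ) : ℝ) * c) < z₂.im
            rw [him] at hl'; linarith
          have t1 := ih2 (z₁, j₁) h₁ hlev1
          have t2 := ih2 (z₂, j₂) h₂ hlev2
          simp only at t1 t2
          omega
        -- inner extUnion of E(k+1)
        have hinner : ∀ p ∈ extUnion E₀
            (idxSum (scriRec E₀ k).2.2 (scriRec E₀ k).1 ∪ idxSMul 2 (scriRec E₀ k).2.1),
            lvl p.1 → p.2 ≤ J + B + b' + 2 * bb + 1 := by
          rintro p hp hl
          rcases mem_extUnion.mp hp with h | h | ⟨j₁, j₂, h₁, h₂, h₃⟩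
          · have := hJ p h hl; omega
          · rcases h with h | h
            · have := hsumEE' p h hl; omega
            · have := htwoEb p h hl; omega
          · have t1 := hJ (p.1, j₁) h₁ hl
            have t2 : j₂ ≤ B + b' + 2 * bb := by
              rcases h₂ with h₂ | h₂
              · have := hsumEE' (p.1, j₂) h₂ hl; simp only at this; omega
              · have := htwoEb (p.1, j₂) h₂ hl; simp only at this; omega
            simp only at t1
            omega
        have hE : ∀ p ∈ (scriRec E₀ (k + 1)).2.2, lvl p.1 → p.2 ≤ bE := by
          rintro p hp hl
          rcases hp with h | h
          · rcases mem_extUnion.mp h with h | h | ⟨j₁, j₂, h₁, h₂, h₃⟩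
            · obtain ⟨m, hm⟩ := h
              obtain ⟨-, h2⟩ := Prod.ext_iff.mp hm; simp only at h2
              omega
            · have := hinner p h hl; omega
            · obtain ⟨m, hm⟩ := h₁
              obtain ⟨-, h2⟩ := Prod.ext_iff.mp hm; simp only at h2
              have t2 := hinner (p.1, j₂) h₂ hl
              simp only at t2
              omega
          · obtain ⟨m, hm, l, hlen, hmem, hfst, hsnd, him, hsum0⟩ :=
              mem_bigU h ((hinv k).2.2.1)
            rcases eq_or_lt_of_le hm with hm1 | hm2
            · -- m = 1
              obtain ⟨q, hq⟩ := List.length_eq_one_iff.mp (hlen.trans hm1.symm)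
              subst hq
              have hq1 : p.1 = q.1 := by rw [hfst, ← hm1]; simp
              have hq2 : p.2 = q.2 := by rw [hsnd]; simp
              have hqmem : q ∈ (scriRec E₀ k).2.2 := hmem q (by simp)
              have := ih3 q hqmem (by rw [← hq1]; exact hl)
              omega
            · -- m ≥ 2
              have hm2' : 2 ≤ m := hm2
              -- each element is at level n
              have hql : ∀ q ∈ l, -((n : ℝ) * c) < q.1.im := by
                intro q hq
                have hmem' : ∀ x ∈ l.map (fun q : ℂ × ℕ => q.1.im - 1), x ≤ -1 := by
                  intro x hx
                  obtain ⟨r, hr, rfl⟩ := List.mem_map.mp hx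
                  have := (hinv k).2.2.1 r (hmem r hr)
                  linarith
                have hkey := list_mem_ge_sum' hmem' (q.1.im - 1)
                  (List.mem_map_of_mem (f := fun q : ℂ × ℕ => q.1.im - 1) hq)
                have hsum' : (l.map (fun q : ℂ × ℕ => q.1.im - 1)).sum
                    = (l.map (fun q : ℂ × ℕ => q.1.im)).sum - (m : ℝ) := by
                  rw [list_sum_map_sub_one (fun q : ℂ × ℕ => q.1.im) l, hlen]
                simp only [List.length_map, hlen] at hkey
                rw [hsum'] at hkey
                have hl' : -(((n + 1 : ℕ) : ℝ) * c) < p.1.im := hl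
                have h2m : (2 : ℝ) ≤ (m : ℝ) := by exact_mod_cast hm2'
                rw [him] at hl'
                -- hkey : Σ im - m ≤ q.1.im - 1 - (m - 1)
                linarith
              have hsnd' : p.2 ≤ m * B := by
                rw [hsnd]
                have := List.sum_le_card_nsmul (l.map Prod.snd) B ?_
                · simpa [hlen, smul_eq_mul] using this
                · intro x hx
                  obtain ⟨q, hq, rfl⟩ := List.mem_map.mp hx
                  exact hB k q (Or.inr (Or.inr (hmem q hq))) (hql q hq)
              have hmn : m ≤ n + 1 := by
                by_contra hgt
                have : (n + 2 : ℝ) ≤ (m : ℝ) := by exact_mod_cast (by omega : n + 2 ≤ m)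
                have hl' : -(((n + 1 : ℕ) : ℝ) * c) < p.1.im := hl
                rw [him] at hl'
                have hup : ((n : ℝ) + 1) * 1 ≤ ((n : ℝ) + 1) * 1 := le_refl _
                have : -(((n + 1 : ℕ) : ℝ) * c) ≥ -(((n : ℝ) + 1) * 1) := by
                  push_cast
                  nlinarith
                linarith
              calc p.2 ≤ m * B := hsnd'
                _ ≤ (n + 1) * B := Nat.mul_le_mul_right _ hmn
                _ ≤ bE := by omega
        exact ⟨hE', hEb, hE⟩
    refine ⟨b' + bb + bE, fun k p hp hl => ?_⟩
    rcases hp with h | h | h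
    · have := (key k).1 p h hl; omega
    · have := (key k).2.1 p h hl; omega
    · have := (key k).2.2 p h hl; omega

end Main3

/-- The unions `E'_I, Ē_I, E_I` of the recursively defined families are index sets (in
particular all the sets `{Im z > -N}` are finite), `Im E'_I ≤ -c`, all elements of `Ē_I` with
`Im z > -c` equal `(0,0)`, and all elements of `E_I` with `Im z > -c` equal `(0,0)` or `(0,1)`,
where `c = min(1, c₀)`. -/
theorem scri_index_sets (E₀ : Set (ℂ × ℕ)) (hE₀ : IsIndexSet E₀)
    (c₀ : ℝ) (hc₀ : 0 < c₀) (hE₀im : ∀ z : ℂ, ∀ j : ℕ, (z, j) ∈ E₀ → z.im ≤ -c₀) :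
    IsIndexSet (⋃ k, (scriRec E₀ k).1) ∧
    IsIndexSet (⋃ k, (scriRec E₀ k).2.1) ∧
    IsIndexSet (⋃ k, (scriRec E₀ k).2.2) ∧
    (∀ N : ℝ, {p : ℂ × ℕ | p ∈ (⋃ k, (scriRec E₀ k).1) ∧ -N < p.1.im}.Finite) ∧
    (∀ N : ℝ, {p : ℂ × ℕ | p ∈ (⋃ k, (scriRec E₀ k).2.1) ∧ -N < p.1.im}.Finite) ∧
    (∀ N : ℝ, {p : ℂ × ℕ | p ∈ (⋃ k, (scriRec E₀ k).2.2) ∧ -N < p.1.im}.Finite) ∧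
    (∀ z : ℂ, ∀ j : ℕ, (z, j) ∈ (⋃ k, (scriRec E₀ k).1) → z.im ≤ -min 1 c₀) ∧
    (∀ z : ℂ, ∀ j : ℕ, (z, j) ∈ (⋃ k, (scriRec E₀ k).2.1) → -min 1 c₀ < z.im →
      (z, j) = ((0 : ℂ), (0 : ℕ))) ∧
    (∀ z : ℂ, ∀ j : ℕ, (z, j) ∈ (⋃ k, (scriRec E₀ k).2.2) → -min 1 c₀ < z.im →
      (z, j) = ((0 : ℂ), (0 : ℕ)) ∨ (z, j) = ((0 : ℂ), (1 : ℕ))) := by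
  obtain ⟨hdc₀, hfin₀, hsc₀⟩ := hE₀
  set c : ℝ := min 1 c₀ with hcdef
  have hc1 : c ≤ 1 := min_le_left _ _
  have hcc₀ : c ≤ c₀ := min_le_right _ _
  have hcpos : 0 < c := lt_min one_pos hc₀
  have hinv := scri_inv hc₀ hE₀im (E₀ := E₀)
  have hdcsc := scri_dc_sc (E₀ := E₀) hdc₀ hsc₀
  have hinM := scri_inM (E₀ := E₀)
  have hord := scri_ord hc₀ hE₀im hfin₀
  -- properties of the generating set
  have hGim : ∀ w ∈ sG E₀, w.im ≤ -c := by
    rintro w (rfl | ⟨j, hw⟩)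
    · simp [Complex.I_im]; linarith
    · exact le_trans (hE₀im w j hw) (by linarith)
  have hGf : ∀ N : ℝ, {w : ℂ | w ∈ sG E₀ ∧ -N < w.im}.Finite := by
    intro N
    refine Set.Finite.subset (Set.Finite.insert (-Complex.I)
      ((hfin₀ N).image Prod.fst)) ?_
    rintro w ⟨(rfl | ⟨j, hw⟩), hN⟩
    · exact Set.mem_insert _ _
    · exact Set.mem_insert_iff.mpr (Or.inr ⟨(w, j), ⟨hw, hN⟩, rfl⟩)
  -- finiteness of slices of the unions
  have hfin : ∀ (N : ℝ) (sel : ℕ → Set (ℂ × ℕ)),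
      (∀ k, sel k = (scriRec E₀ k).1 ∨ sel k = (scriRec E₀ k).2.1 ∨
        sel k = (scriRec E₀ k).2.2) →
      {p : ℂ × ℕ | p ∈ (⋃ k, sel k) ∧ -N < p.1.im}.Finite := by
    intro N sel hsel
    set n : ℕ := ⌈N / c⌉₊ with hn
    have hnc : N ≤ (n : ℝ) * c := by
      rcases le_or_gt N 0 with hN | hN
      · have : (0 : ℝ) ≤ (n : ℝ) * c := by positivity
        linarith
      · have h1 : N / c ≤ (n : ℝ) := Nat.le_ceil _
        calc N = (N / c) * c := by field_simp
          _ ≤ (n : ℝ) * c := by nlinarith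
    obtain ⟨B, hB⟩ := hord n
    refine Set.Finite.subset (Set.Finite.prod
      (inM_slice_finite hcpos hGim hGf N) (Set.finite_Iic B)) ?_
    rintro p ⟨hp, hN⟩
    obtain ⟨k, hk⟩ := Set.mem_iUnion.mp hp
    have hmem3 : p ∈ (scriRec E₀ k).1 ∨ p ∈ (scriRec E₀ k).2.1 ∨
        p ∈ (scriRec E₀ k).2.2 := by
      rcases hsel k with h | h | h <;> rw [h] at hk
      · exact Or.inl hk
      · exact Or.inr (Or.inl hk)
      · exact Or.inr (Or.inr hk)
    have hM : inM (sG E₀) p.1 := by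
      obtain ⟨m1, m2, m3⟩ := hinM k
      rcases hmem3 with h | h | h
      exacts [m1 p h, m2 p h, m3 p h]
    have hlev : -((n : ℝ) * c) < p.1.im := lt_of_le_of_lt (by linarith) hN
    exact Set.mem_prod.mpr ⟨⟨hM, hN⟩, hB k p hmem3 hlev⟩
  refine ⟨⟨?_, ?_, ?_⟩, ⟨?_, ?_, ?_⟩, ⟨?_, ?_, ?_⟩, ?_, ?_, ?_, ?_, ?_, ?_⟩
  · exact DC.iUnion fun k => ((hdcsc k).1).1
  · exact fun C => hfin C _ (fun k => Or.inl rfl)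
  · exact SC.iUnion fun k => ((hdcsc k).2).1
  · exact DC.iUnion fun k => ((hdcsc k).1).2.1
  · exact fun C => hfin C _ (fun k => Or.inr (Or.inl rfl))
  · exact SC.iUnion fun k => ((hdcsc k).2).2.1
  · exact DC.iUnion fun k => ((hdcsc k).1).2.2
  · exact fun C => hfin C _ (fun k => Or.inr (Or.inr rfl))
  · exact SC.iUnion fun k => ((hdcsc k).2).2.2
  · exact fun C => hfin C _ (fun k => Or.inl rfl)
  · exact fun C => hfin C _ (fun k => Or.inr (Or.inl rfl))
  · exact fun C => hfin C _ (fun k => Or.inr (Or.inr rfl))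
  · rintro z j hz
    obtain ⟨k, hk⟩ := Set.mem_iUnion.mp hz
    exact (hinv k).1 (z, j) hk
  · rintro z j hz hlt
    obtain ⟨k, hk⟩ := Set.mem_iUnion.mp hz
    exact (hinv k).2.2.2.1 (z, j) hk hlt
  · rintro z j hz hlt
    obtain ⟨k, hk⟩ := Set.mem_iUnion.mp hz
    exact (hinv k).2.2.2.2 (z, j) hk hlt
end

section
/- Let m ∈ ℝ, Λ ≥ 0, and let χ̃ : ℝ → [0,1] be Lipschitz continuous with Lipschitz constant Λ. Then there exists ρ₀ ∈ (0,1) with 2|m|ρ₀ < 1 such that for every ρ ∈ (0, ρ₀] and every v ∈ ℝ there is exactly one f ∈ ℝ satisfying the equation f = 1 + v − 2mρ·χ̃(f)·(log ρ − log(1 − 2mρ)); moreover this unique solution satisfies |f − (1+v)| ≤ 2|m|·ρ·|log ρ − log(1 − 2mρ)|. -/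
set_option maxHeartbeats 1000000

/-- Unique solvability of the functional equation
`f = 1 + v - 2mρ χ(f) (log ρ - log(1 - 2mρ))` for small `ρ`, where `χ : ℝ → [0,1]` is
Lipschitz with constant `Λ`; the unique solution satisfies
`|f - (1+v)| ≤ 2|m| ρ |log ρ - log(1 - 2mρ)|`. -/
theorem compactification_fixed_point (m Λ : ℝ) (hΛ : 0 ≤ Λ) (χ : ℝ → ℝ)
    (hrange : ∀ a : ℝ, χ a ∈ Set.Icc (0 : ℝ) 1)
    (hlip : ∀ a b : ℝ, |χ a - χ b| ≤ Λ * |a - b|) :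
    ∃ ρ₀ : ℝ, ρ₀ ∈ Set.Ioo (0 : ℝ) 1 ∧ 2 * |m| * ρ₀ < 1 ∧
      ∀ ρ ∈ Set.Ioc (0 : ℝ) ρ₀, ∀ v : ℝ,
        (∃! f : ℝ,
          f = 1 + v - 2 * m * ρ * χ f * (Real.log ρ - Real.log (1 - 2 * m * ρ))) ∧
        ∀ f : ℝ,
          f = 1 + v - 2 * m * ρ * χ f * (Real.log ρ - Real.log (1 - 2 * m * ρ)) →
            |f - (1 + v)| ≤ 2 * |m| * ρ * |Real.log ρ - Real.log (1 - 2 * m * ρ)| := by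
  set A : ℝ := 2 * |m| with hAdef
  set B : ℝ := A * Λ with hBdef
  have hA0 : 0 ≤ A := by positivity
  have hB0 : 0 ≤ B := by positivity
  set ρ₀ : ℝ := min ((1 / (3 * B + 1)) ^ 2) (1 / (2 * (A + 1))) with hρ₀def
  have hρ₀pos : 0 < ρ₀ := by
    apply lt_min <;> positivity
  have hρ₀A : ρ₀ ≤ 1 / (2 * (A + 1)) := min_le_right _ _
  have hρ₀B : ρ₀ ≤ (1 / (3 * B + 1)) ^ 2 := min_le_left _ _
  have hρ₀half : ρ₀ ≤ 1 / 2 := by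
    refine hρ₀A.trans ?_
    rw [div_le_div_iff₀ (by positivity) (by norm_num)]
    nlinarith
  refine ⟨ρ₀, ⟨hρ₀pos, by linarith⟩, ?_, ?_⟩
  · -- 2|m|ρ₀ < 1
    have : A * ρ₀ ≤ A * (1 / (2 * (A + 1))) := by
      exact mul_le_mul_of_nonneg_left hρ₀A hA0
    have h2 : A * (1 / (2 * (A + 1))) < 1 := by
      rw [mul_one_div, div_lt_one (by positivity)]
      nlinarith
    linarith
  intro ρ hρ v
  obtain ⟨hρ0, hρle⟩ := hρ
  have hρhalf : ρ ≤ 1 / 2 := hρle.trans hρ₀half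
  have hρ1 : ρ < 1 := by linarith
  have hρB : ρ ≤ (1 / (3 * B + 1)) ^ 2 := hρle.trans hρ₀B
  have hA' : |2 * m * ρ| = A * ρ := by
    rw [abs_mul, abs_mul, abs_two, abs_of_pos hρ0, hAdef]
  have hmρ : |2 * m * ρ| ≤ 1 / 2 := by
    have h1 : |2 * m * ρ| = A * ρ := hA'
    have h2 : A * ρ ≤ A * (1 / (2 * (A + 1))) :=
      mul_le_mul_of_nonneg_left (hρle.trans hρ₀A) hA0
    have h3 : A * (1 / (2 * (A + 1))) ≤ 1 / 2 := by
      rw [mul_one_div, div_le_div_iff₀ (by positivity) (by norm_num)]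
      nlinarith
    linarith
  have hmρ' := abs_le.mp hmρ
  have hx1 : (1 : ℝ) / 2 ≤ 1 - 2 * m * ρ := by linarith [hmρ'.2]
  have hx2 : 1 - 2 * m * ρ ≤ 3 / 2 := by linarith [hmρ'.1]
  have hxpos : 0 < 1 - 2 * m * ρ := by linarith
  -- bound on |log (1 - 2mρ)|
  have hlog2 : |Real.log (1 - 2 * m * ρ)| ≤ 1 := by
    rw [abs_le]
    constructor
    · have h := Real.log_le_sub_one_of_pos (x := (1 - 2 * m * ρ)⁻¹) (by positivity)
      rw [Real.log_inv] at h
      have : (1 - 2 * m * ρ)⁻¹ ≤ 2 := by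
        rw [inv_le_comm₀ (by positivity) (by norm_num)]
        linarith
      linarith
    · have h := Real.log_le_sub_one_of_pos hxpos
      linarith
  -- bound ρ |log ρ| ≤ 2 √ρ
  set s : ℝ := Real.sqrt ρ with hsdef
  have hs0 : 0 < s := Real.sqrt_pos.mpr hρ0
  have hss : s * s = ρ := Real.mul_self_sqrt hρ0.le
  have hlogρneg : Real.log ρ < 0 := Real.log_neg hρ0 hρ1
  have hlogρ : ρ * |Real.log ρ| ≤ 2 * s := by
    have h := Real.log_le_sub_one_of_pos (x := s⁻¹) (by positivity)
    rw [Real.log_inv, Real.log_sqrt hρ0.le] at h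
    have h' : -Real.log ρ ≤ 2 / s := by
      rw [div_eq_mul_inv]
      nlinarith
    rw [abs_of_neg hlogρneg]
    have : ρ * -Real.log ρ ≤ ρ * (2 / s) := by
      apply mul_le_mul_of_nonneg_left h' hρ0.le
    calc ρ * -Real.log ρ ≤ ρ * (2 / s) := this
      _ = 2 * s := by
        rw [← hss]
        field_simp
  have hsle : s ≤ 1 / (3 * B + 1) := by
    have := Real.sqrt_le_sqrt hρB
    rwa [Real.sqrt_sq (by positivity)] at this
  have hρles : ρ ≤ s := by
    nlinarith [Real.sq_sqrt hρ0.le, hs0.le]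
  set L : ℝ := Real.log ρ - Real.log (1 - 2 * m * ρ) with hLdef
  have hLbound : ρ * |L| ≤ 3 * s := by
    have h1 : |L| ≤ |Real.log ρ| + |Real.log (1 - 2 * m * ρ)| := abs_sub _ _
    have h2 : ρ * |L| ≤ ρ * (|Real.log ρ| + |Real.log (1 - 2 * m * ρ)|) :=
      mul_le_mul_of_nonneg_left h1 hρ0.le
    rw [mul_add] at h2
    have h3 : ρ * |Real.log (1 - 2 * m * ρ)| ≤ ρ * 1 :=
      mul_le_mul_of_nonneg_left hlog2 hρ0.le
    rw [mul_one] at h3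
    linarith
  set K : ℝ := B * (ρ * |L|) with hKdef
  have hK0 : 0 ≤ K := by positivity
  have hK1 : K < 1 := by
    have h1 : K ≤ B * (3 * s) := mul_le_mul_of_nonneg_left hLbound hB0
    have h2 : B * (3 * s) ≤ 3 * B * (1 / (3 * B + 1)) := by
      have := mul_le_mul_of_nonneg_left hsle (mul_nonneg (by norm_num : (0:ℝ) ≤ 3) hB0)
      linarith [this]
    have h3 : 3 * B * (1 / (3 * B + 1)) < 1 := by
      rw [mul_one_div, div_lt_one (by positivity)]
      linarith
    linarith
  set F : ℝ → ℝ := fun f => 1 + v - 2 * m * ρ * χ f * L with hFdef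
  have hFlip : ∀ a b : ℝ, |F a - F b| ≤ K * |a - b| := by
    intro a b
    have h1 : F a - F b = -(2 * m * ρ * L * (χ a - χ b)) := by simp only [hFdef]; ring
    rw [h1, abs_neg, abs_mul, abs_mul]
    have h3 : |χ a - χ b| ≤ Λ * |a - b| := hlip a b
    have h4 : 0 ≤ |2 * m * ρ| * |L| := by positivity
    calc |2 * m * ρ| * |L| * |χ a - χ b| ≤ |2 * m * ρ| * |L| * (Λ * |a - b|) := by
          exact mul_le_mul_of_nonneg_left h3 h4
      _ = K * |a - b| := by rw [hA']; simp only [hKdef, hBdef]; ring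
  -- contraction
  set K' : NNReal := ⟨K, hK0⟩ with hK'def
  have hcontr : ContractingWith K' F := by
    constructor
    · exact_mod_cast hK1
    · apply LipschitzWith.of_dist_le_mul
      intro a b
      rw [Real.dist_eq, Real.dist_eq]
      exact hFlip a b
  have hfix : F (hcontr.fixedPoint F) = hcontr.fixedPoint F :=
    hcontr.fixedPoint_isFixedPt
  have huniq : ∀ g : ℝ, g = F g → g = hcontr.fixedPoint F := by
    intro g hg
    have h1 : |g - hcontr.fixedPoint F| ≤ K * |g - hcontr.fixedPoint F| := by
      calc |g - hcontr.fixedPoint F| = |F g - F (hcontr.fixedPoint F)| := by rw [← hg, hfix]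
        _ ≤ K * |g - hcontr.fixedPoint F| := hFlip _ _
    have h2 : |g - hcontr.fixedPoint F| ≤ 0 := by nlinarith [abs_nonneg (g - hcontr.fixedPoint F)]
    have := abs_nonpos_iff.mp (h2)
    linarith [sub_eq_zero.mp this, le_of_eq (sub_eq_zero.mp this)]
  have hFeq : ∀ x : ℝ, F x = 1 + v - 2 * m * ρ * χ x * L := fun x => rfl
  refine ⟨⟨hcontr.fixedPoint F, (hfix.symm).trans (hFeq _), fun g hg => huniq g (hg.trans (hFeq g).symm)⟩, ?_⟩
  intro f hf
  have h1 : f - (1 + v) = -(2 * m * ρ * χ f * L) := by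
    conv_lhs => rw [hf]
    ring
  have hχ := hrange f
  have hχabs : |χ f| ≤ 1 := abs_le.mpr ⟨by linarith [hχ.1], hχ.2⟩
  rw [h1, abs_neg, abs_mul, abs_mul]
  rw [hA']
  have : A * ρ * |χ f| * |L| ≤ A * ρ * 1 * |L| := by
    have h0 : 0 ≤ A * ρ := by positivity
    have h5 : A * ρ * |χ f| ≤ A * ρ * 1 := mul_le_mul_of_nonneg_left hχabs h0
    exact mul_le_mul_of_nonneg_right h5 (abs_nonneg L)
  calc A * ρ * |χ f| * |L| ≤ A * ρ * 1 * |L| := this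
    _ = 2 * |m| * ρ * |L| := by rw [hAdef]; ring
end
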